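/- There exists a constant c₅ > 0 such that |f(x,u)|² ≤ c₅ · u·f(x,u) for all x ∈ ℝ³ and all u with 0 < |u| ≤ 1. -/

import Mathlib

/-- Under (f1), (f2') and (f3), there exists `c₅ > 0` such that
`|f(x,u)|² ≤ c₅·u·f(x,u)` for all `x ∈ ℝ³` and all `u` with `0 < |u| ≤ 1`. -/
theorem stmt_5
    (f : EuclideanSpace ℝ (Fin 3) → ℝ → ℝ)
    (hf : Continuous fun q : EuclideanSpace ℝ (Fin 3) × ℝ => f q.1 q.2)
    (F : EuclideanSpace ℝ (Fin 3) → ℝ → ℝ)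
    (hF : ∀ x u, F x u = ∫ s in (0 : ℝ)..u, f x s)
    (p : ℝ) (hp : 2 < p) (hp6 : p < 6)
    (c : ℝ) (hc : 0 < c)
    (hf1 : ∀ x u, |f x u| ≤ c * (1 + |u| ^ (p - 1)))
    (hf2 : ∀ ε > (0 : ℝ), ∃ δ > (0 : ℝ), ∀ x u, |u| ≤ δ → |f x u| ≤ ε * |u|)
    (a₀ b₀ α : ℝ) (ha₀ : 0 < a₀) (hb₀ : 0 < b₀) (hα : 0 < α)
    (hf3 : ∀ x u, u ≠ 0 →
      0 < (4 + 1 / (a₀ * |u| ^ α + b₀)) * F x u ∧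
      (4 + 1 / (a₀ * |u| ^ α + b₀)) * F x u ≤ u * f x u) :
    ∃ c₅ > (0 : ℝ), ∀ x u, 0 < |u| → |u| ≤ 1 → |f x u| ^ 2 ≤ c₅ * (u * f x u) := by
  obtain ⟨δ, hδ, hδf⟩ := hf2 1 one_pos
  refine ⟨max 1 (2 * c / δ), lt_of_lt_of_le one_pos (le_max_left _ _), ?_⟩
  intro x u hu0 hu1
  have hune : u ≠ 0 := by
    intro h; rw [h] at hu0; simp at hu0
  have huf : 0 < u * f x u := lt_of_lt_of_le (hf3 x u hune).1 (hf3 x u hune).2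
  -- key bound: |f x u| ≤ c₅ * |u|
  have key : |f x u| ≤ max 1 (2 * c / δ) * |u| := by
    rcases le_or_gt (|u|) δ with h | h
    · calc |f x u| ≤ 1 * |u| := hδf x u h
        _ ≤ max 1 (2 * c / δ) * |u| :=
          mul_le_mul_of_nonneg_right (le_max_left _ _) (abs_nonneg _)
    · have hpow : |u| ^ (p - 1) ≤ 1 :=
        Real.rpow_le_one (abs_nonneg _) hu1 (by linarith)
      calc |f x u| ≤ c * (1 + |u| ^ (p - 1)) := hf1 x u
        _ ≤ c * 2 := by nlinarith
        _ = (2 * c / δ) * δ := by field_simp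
        _ ≤ (2 * c / δ) * |u| := by
            apply mul_le_mul_of_nonneg_left h.le (by positivity)
        _ ≤ max 1 (2 * c / δ) * |u| :=
          mul_le_mul_of_nonneg_right (le_max_right _ _) (abs_nonneg _)
  have habs : |u| * |f x u| = u * f x u := by
    rw [← abs_mul]; exact abs_of_pos huf
  calc |f x u| ^ 2 = |f x u| * |f x u| := pow_two _
    _ ≤ (max 1 (2 * c / δ) * |u|) * |f x u| :=
        mul_le_mul_of_nonneg_right key (abs_nonneg _)
    _ = max 1 (2 * c / δ) * (u * f x u) := by rw [mul_assoc, habs]
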